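/- Let Y = Y' ∪ Circ_n be a graph with an n-handle, i.e., Y' and the cycle Circ_n share exactly one edge (and its two endpoints), n ≥ 3. Then κ(Y) = (n−1)·κ(Y'). -/

import Mathlib

/-- An orientation of a simple graph: a choice of direction for each edge. -/
structure GraphOrientation {V : Type*} (G : SimpleGraph V) where
  dir : V → V → Prop
  consistent : ∀ u v, G.Adj u v ↔ (dir u v ∨ dir v u)
  asymm : ∀ u v, dir u v → ¬ dir v u

/-- An orientation is acyclic if its directed graph has no directed cycle. -/
def GraphOrientation.IsAcyclic {V : Type*} {G : SimpleGraph V} (O : GraphOrientation G) : Prop :=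
  ∀ v, ¬ Relation.TransGen O.dir v v

/-- The type of acyclic orientations of `G`. -/
def AcycGraphOrientation {V : Type*} (G : SimpleGraph V) := {O : GraphOrientation G // O.IsAcyclic}

/-- `Click O O'` holds when `O'` is obtained from `O` by a source-to-sink operation:
reversing all edges incident to some source vertex `v`. -/
def Click {V : Type*} {G : SimpleGraph V} (O O' : GraphOrientation G) : Prop :=
  ∃ v, (∀ u, ¬ O.dir u v) ∧
    ∀ u w, O'.dir u w ↔ (((u = v ∨ w = v) ∧ O.dir w u) ∨ (u ≠ v ∧ w ≠ v ∧ O.dir u w))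

/-- κ(G): the number of equivalence classes of acyclic orientations of `G` under the
equivalence generated by source-to-sink operations. -/
noncomputable def kappa {V : Type*} (G : SimpleGraph V) : ℕ :=
  Nat.card (Quot (fun A B : AcycGraphOrientation G => Click A.1 B.1))

/-- The graph obtained from `G'` by attaching a handle: a path of `k ≥ 1` new vertices
`v - 0 - 1 - ⋯ - (k-1) - w` joining the adjacent vertices `v` and `w` of `G'`, so that
the new path together with the edge `{v, w}` forms a cycle of length `k + 2` sharing
exactly the edge `{v, w}` with `G'`. -/
def handleGraph {V' : Type*} (G' : SimpleGraph V') (v w : V') (k : ℕ) :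
    SimpleGraph (V' ⊕ Fin k) :=
  SimpleGraph.fromRel (fun x y =>
    match x, y with
    | .inl a, .inl b => G'.Adj a b
    | .inl a, .inr i => (a = v ∧ (i : ℕ) = 0) ∨ (a = w ∧ (i : ℕ) = k - 1)
    | .inr i, .inr j => (j : ℕ) = (i : ℕ) + 1
    | _, _ => False)


namespace Handle

open Relation

variable {V : Type*} {G : SimpleGraph V}

lemma GO.ext' {O O' : GraphOrientation G} (h : O.dir = O'.dir) : O = O' := by
  cases O; cases O'; simp_all

lemma GO.not_self (O : GraphOrientation G) (x : V) : ¬ O.dir x x :=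
  fun h => O.asymm x x h h

lemma GO.dir_adj (O : GraphOrientation G) {x y : V} (h : O.dir x y) : G.Adj x y :=
  (O.consistent x y).2 (Or.inl h)

lemma GO.not_dir_of_not_adj (O : GraphOrientation G) {x y : V} (h : ¬ G.Adj x y) : ¬ O.dir x y :=
  fun hd => h (GO.dir_adj O hd)

lemma GO.dir_of_adj_not (O : GraphOrientation G) {x y : V} (h : G.Adj x y) (h2 : ¬ O.dir y x) :
    O.dir x y := ((O.consistent x y).1 h).resolve_right h2

/-- The result of clicking at `x` (meaningful when `x` is a source). -/
def clickAt (O : GraphOrientation G) (x : V) : GraphOrientation G where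
  dir u w := ((u = x ∨ w = x) ∧ O.dir w u) ∨ (u ≠ x ∧ w ≠ x ∧ O.dir u w)
  consistent := by
    intro u w
    rw [O.consistent u w]
    by_cases hu : u = x <;> by_cases hw : w = x <;>
      subst_vars <;> constructor <;> intro h <;> tauto
  asymm := by
    intro u w h1 h2
    rcases h1 with ⟨h, d1⟩ | ⟨hu, hw, d1⟩ <;> rcases h2 with ⟨h', d2⟩ | ⟨hu', hw', d2⟩ <;>
      first
        | exact O.asymm _ _ d1 d2
        | tauto

lemma click_clickAt (O : GraphOrientation G) (x : V) (hx : ∀ u, ¬ O.dir u x) :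
    Click O (clickAt O x) :=
  ⟨x, hx, fun _ _ => Iff.rfl⟩

lemma Click.eq_clickAt {O O' : GraphOrientation G} (h : Click O O') :
    ∃ x, (∀ u, ¬ O.dir u x) ∧ O' = clickAt O x := by
  obtain ⟨x, hx, hiff⟩ := h
  refine ⟨x, hx, GO.ext' ?_⟩
  funext u w
  exact propext (hiff u w)

lemma clickAt_dir (O : GraphOrientation G) (x u w : V) :
    (clickAt O x).dir u w ↔
      (((u = x ∨ w = x) ∧ O.dir w u) ∨ (u ≠ x ∧ w ≠ x ∧ O.dir u w)) := Iff.rfl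

lemma clickAt_dir_of_ne {O : GraphOrientation G} {x u w : V} (hu : u ≠ x) (hw : w ≠ x) :
    (clickAt O x).dir u w ↔ O.dir u w := by
  rw [clickAt_dir]
  tauto

lemma clickAt_dir_left {O : GraphOrientation G} {x w : V} (hx : ∀ u, ¬ O.dir u x) :
    ¬ (clickAt O x).dir x w := by
  rw [clickAt_dir]
  rintro (⟨_, d⟩ | ⟨h, _, _⟩)
  · exact hx w d
  · exact h rfl

lemma clickAt_dir_right {O : GraphOrientation G} {x u : V} (hu : u ≠ x) :
    (clickAt O x).dir u x ↔ O.dir x u := by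
  rw [clickAt_dir]
  constructor
  · rintro (⟨_, d⟩ | ⟨_, h, _⟩)
    · exact d
    · exact absurd rfl h
  · intro d
    exact Or.inl ⟨Or.inr rfl, d⟩

/-- Clicking a source of an acyclic orientation yields an acyclic orientation. -/
lemma clickAt_acyclic {O : GraphOrientation G} {x : V} (hx : ∀ u, ¬ O.dir u x)
    (hO : O.IsAcyclic) : (clickAt O x).IsAcyclic := by
  have hne : ∀ {a b : V}, TransGen (clickAt O x).dir a b → a ≠ x := by
    intro a b h hax
    obtain ⟨c, h', -⟩ := Relation.TransGen.head'_iff.1 h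
    rw [hax] at h'
    exact clickAt_dir_left hx h'
  have htrans : ∀ {a b : V}, TransGen (clickAt O x).dir a b → b ≠ x → TransGen O.dir a b := by
    intro a b h
    induction h with
    | single h' =>
      intro hb
      have ha : _ ≠ x := hne (TransGen.single h')
      exact TransGen.single ((clickAt_dir_of_ne ha hb).1 h')
    | @tail b c h1 h2 ih =>
      intro hc
      have hb : b ≠ x := fun hb => clickAt_dir_left hx (hb ▸ h2)
      exact TransGen.tail (ih hb) ((clickAt_dir_of_ne hb hc).1 h2)
  intro a ha
  exact hO a (htrans ha (hne ha))

/-- From a rank function, acyclicity. -/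
lemma acyclic_of_rank {O : GraphOrientation G} (ρ : V → ℕ)
    (h : ∀ x y, O.dir x y → ρ x < ρ y) : O.IsAcyclic := by
  have key : ∀ x y, TransGen O.dir x y → ρ x < ρ y := by
    intro x y hxy
    induction hxy with
    | single h' => exact h _ _ h'
    | tail _ h2 ih => exact lt_trans ih (h _ _ h2)
  intro a ha
  exact lt_irrefl _ (key a a ha)

open Classical in
/-- Any acyclic relation on a finite type admits a rank function. -/
lemma exists_rank [Fintype V] {d : V → V → Prop} (hd : ∀ x, ¬ TransGen d x x) :
    ∃ ρ : V → ℕ, ∀ x y, d x y → ρ x < ρ y := by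
  refine ⟨fun x => (Finset.univ.filter (fun z => TransGen d z x)).card, ?_⟩
  intro x y hxy
  apply Finset.card_lt_card
  constructor
  · intro z hz
    simp only [Finset.mem_filter, Finset.mem_univ, true_and] at hz ⊢
    exact hz.tail hxy
  · intro hsub
    have hx : x ∈ Finset.univ.filter (fun z => TransGen d z y) := by
      simp only [Finset.mem_filter, Finset.mem_univ, true_and]
      exact TransGen.single hxy
    have := hsub hx
    simp only [Finset.mem_filter, Finset.mem_univ, true_and] at this
    exact hd x this

/-- Adding one edge `a → b` to an acyclic relation, provided there is no path `b ⇝ a`,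
keeps it acyclic. -/
lemma aug_acyclic {d : V → V → Prop} (hd : ∀ x, ¬ TransGen d x x) (a b : V) (hab : a ≠ b)
    (hba : ¬ TransGen d b a) :
    ∀ x, ¬ TransGen (fun p q => d p q ∨ (p = a ∧ q = b)) x x := by
  set d' := fun p q => d p q ∨ (p = a ∧ q = b) with hd'
  have key : ∀ x y, TransGen d' x y →
      TransGen d x y ∨ (ReflTransGen d x a ∧ ReflTransGen d b y) := by
    intro x y h
    induction h with
    | single h' =>
      rcases h' with h' | ⟨rfl, rfl⟩
      · exact Or.inl (TransGen.single h')
      · exact Or.inr ⟨ReflTransGen.refl, ReflTransGen.refl⟩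
    | tail h1 h2 ih =>
      rcases h2 with h2 | ⟨rfl, rfl⟩
      · rcases ih with ih | ⟨ih1, ih2⟩
        · exact Or.inl (ih.tail h2)
        · exact Or.inr ⟨ih1, ih2.tail h2⟩
      · rcases ih with ih | ⟨ih1, ih2⟩
        · exact Or.inr ⟨ih.to_reflTransGen, ReflTransGen.refl⟩
        · rcases ih2.cases_head with rfl | ⟨c, hc, hc2⟩
          · exact absurd rfl hab
          · exact absurd (TransGen.head' hc hc2) hba
  intro x hx
  rcases key x x hx with h | ⟨h1, h2⟩
  · exact hd x h
  · rcases (h2.trans h1).cases_head with rfl | ⟨c, hc, hc2⟩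
    · exact hab rfl
    · exact hba (TransGen.head' hc hc2)

end Handle

section Specific

open Relation Sum

variable {V' : Type*}

/-- The vertices of the handle cycle: `c 0 = v`, `c j = j-1` (handle vertex) for
`1 ≤ j ≤ k`, `c (k+1) = w`. -/
def c (v w : V') (k : ℕ) (j : ℕ) : V' ⊕ Fin k :=
  if h : 1 ≤ j ∧ j ≤ k then .inr ⟨j - 1, by omega⟩ else if j = 0 then .inl v else .inl w

variable {v w : V'} {k : ℕ}

lemma c_zero : c v w k 0 = .inl v := by simp [c]

lemma c_last : c v w k (k+1) = .inl w := by
  have : ¬ (1 ≤ k+1 ∧ k+1 ≤ k) := by omega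
  simp [c, this]

lemma c_mid (j : ℕ) (h1 : 1 ≤ j) (h2 : j ≤ k) : c v w k j = .inr ⟨j - 1, by omega⟩ := by
  simp [c, h1, h2]

lemma c_inr (i : Fin k) : c v w k (i.val + 1) = .inr i := by
  rw [c_mid (i.val + 1) (by omega) (by omega)]
  simp

lemma c_inj (hvw' : v ≠ w) (hk : 1 ≤ k) {i j : ℕ} (hi : i ≤ k + 1) (hj : j ≤ k + 1)
    (h : c v w k i = c v w k j) : i = j := by
  rcases Nat.eq_zero_or_pos i with rfl | hi1
  · rcases Nat.eq_zero_or_pos j with rfl | hj1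
    · rfl
    · rcases Nat.lt_or_ge j (k+1) with hj2 | hj2
      · rw [c_zero, c_mid j hj1 (by omega)] at h; exact absurd h (by simp)
      · have : j = k + 1 := by omega
        subst this
        rw [c_zero, c_last] at h
        simp only [inl.injEq] at h
        exact absurd h hvw'
  · rcases Nat.lt_or_ge i (k+1) with hi2 | hi2
    · rw [c_mid i hi1 (by omega)] at h
      rcases Nat.eq_zero_or_pos j with rfl | hj1
      · rw [c_zero] at h; exact absurd h (by simp)
      rcases Nat.lt_or_ge j (k+1) with hj2 | hj2
      · rw [c_mid j hj1 (by omega)] at h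
        simp only [inr.injEq, Fin.mk.injEq] at h
        omega
      · have : j = k + 1 := by omega
        subst this
        rw [c_last] at h; exact absurd h (by simp)
    · have : i = k + 1 := by omega
      subst this
      rw [c_last] at h
      rcases Nat.eq_zero_or_pos j with rfl | hj1
      · rw [c_zero] at h
        simp only [inl.injEq] at h
        exact absurd h.symm hvw'
      rcases Nat.lt_or_ge j (k+1) with hj2 | hj2
      · rw [c_mid j hj1 (by omega)] at h; exact absurd h (by simp)
      · omega

lemma c_ne_inl_mid {j : ℕ} (h1 : 1 ≤ j) (h2 : j ≤ k) (a : V') : c v w k j ≠ .inl a := by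
  rw [c_mid j h1 h2]; simp

lemma c_eq_inl {j : ℕ} (hj : j ≤ k + 1) {a : V'} (h : c v w k j = .inl a) :
    j = 0 ∨ j = k + 1 := by
  by_contra hcon
  push_neg at hcon
  exact c_ne_inl_mid (by omega) (by omega) a h

end Specific

section Adj

open Relation Sum Handle

variable {V' : Type*} {G' : SimpleGraph V'} {v w : V'} {k : ℕ}

lemma adj_inl_inl {a b : V'} :
    (handleGraph G' v w k).Adj (.inl a) (.inl b) ↔ G'.Adj a b := by
  rw [handleGraph, SimpleGraph.fromRel_adj]
  constructor
  · rintro ⟨-, h | h⟩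
    · exact h
    · exact h.symm
  · intro h
    exact ⟨by simp [h.ne], Or.inl h⟩

lemma adj_inl_inr {a : V'} {i : Fin k} :
    (handleGraph G' v w k).Adj (.inl a) (.inr i) ↔
      ((a = v ∧ (i : ℕ) = 0) ∨ (a = w ∧ (i : ℕ) = k - 1)) := by
  rw [handleGraph, SimpleGraph.fromRel_adj]
  constructor
  · rintro ⟨-, h | h⟩
    · exact h
    · exact h.elim
  · intro h
    exact ⟨by simp, Or.inl h⟩

lemma adj_inr_inr {i j : Fin k} :
    (handleGraph G' v w k).Adj (.inr i) (.inr j) ↔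
      ((j : ℕ) = (i : ℕ) + 1 ∨ (i : ℕ) = (j : ℕ) + 1) := by
  rw [handleGraph, SimpleGraph.fromRel_adj]
  constructor
  · rintro ⟨-, h | h⟩
    · exact Or.inl h
    · exact Or.inr h
  · intro h
    refine ⟨?_, h⟩
    rintro heq
    rw [inr.injEq] at heq
    subst heq
    omega

variable (hvw : G'.Adj v w) (hk : 1 ≤ k)

lemma adj_c (hvw' : v ≠ w) (hk : 1 ≤ k) {j : ℕ} (hj : j ≤ k) :
    (handleGraph G' v w k).Adj (c v w k j) (c v w k (j+1)) := by
  rcases Nat.eq_zero_or_pos j with rfl | hj1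
  · rw [c_zero, c_mid 1 le_rfl hk, adj_inl_inr]
    exact Or.inl ⟨rfl, rfl⟩
  · rcases Nat.lt_or_ge j k with hj2 | hj2
    · rw [c_mid j hj1 hj, c_mid (j+1) (by omega) (by omega), adj_inr_inr]
      left; simp; omega
    · have hjk : j = k := by omega
      rw [hjk, c_mid k (by omega) le_rfl, c_last, (handleGraph G' v w k).adj_comm, adj_inl_inr]
      right
      exact ⟨rfl, rfl⟩

/-- Classification of the edges of the handle graph. -/
lemma edge_cases (hvw' : v ≠ w) (hk : 1 ≤ k) {x y : V' ⊕ Fin k}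
    (h : (handleGraph G' v w k).Adj x y) :
    (∃ a b, x = .inl a ∧ y = .inl b ∧ G'.Adj a b) ∨
    (∃ j ≤ k, (x = c v w k j ∧ y = c v w k (j+1)) ∨ (x = c v w k (j+1) ∧ y = c v w k j)) := by
  match x, y with
  | .inl a, .inl b => exact Or.inl ⟨a, b, rfl, rfl, adj_inl_inl.1 h⟩
  | .inl a, .inr i =>
    right
    rcases adj_inl_inr.1 h with ⟨rfl, hi⟩ | ⟨rfl, hi⟩
    · refine ⟨0, by omega, Or.inl ⟨c_zero.symm, ?_⟩⟩
      rw [c_mid 1 le_rfl hk]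
      congr 1
      exact Fin.ext (by simpa using hi)
    · refine ⟨k, le_rfl, Or.inr ⟨c_last.symm, ?_⟩⟩
      rw [c_mid k hk le_rfl]
      congr 1
      exact Fin.ext (by simpa using hi)
  | .inr i, .inl a =>
    right
    rcases adj_inl_inr.1 h.symm with ⟨rfl, hi⟩ | ⟨rfl, hi⟩
    · refine ⟨0, by omega, Or.inr ⟨?_, c_zero.symm⟩⟩
      rw [c_mid 1 le_rfl hk]
      congr 1
      exact Fin.ext (by simpa using hi)
    · refine ⟨k, le_rfl, Or.inl ⟨?_, c_last.symm⟩⟩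
      rw [c_mid k hk le_rfl]
      congr 1
      exact Fin.ext (by simpa using hi)
  | .inr i, .inr t =>
    right
    rcases adj_inr_inr.1 h with hti | hti
    · refine ⟨i.val + 1, by omega, Or.inl ⟨(c_inr i).symm, ?_⟩⟩
      rw [show i.val + 1 + 1 = t.val + 1 by omega, c_inr]
    · refine ⟨t.val + 1, by omega, Or.inr ⟨?_, (c_inr t).symm⟩⟩
      rw [show t.val + 1 + 1 = i.val + 1 by omega, c_inr]

/-- The two endpoints `c j`, `c (j+1)` of a handle-cycle edge are never both `inl`. -/
lemma c_not_both_inl (hk : 1 ≤ k) {j : ℕ} (hj : j ≤ k) {a b : V'}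
    (h1 : c v w k j = .inl a) (h2 : c v w k (j+1) = .inl b) : False := by
  rcases c_eq_inl (by omega) h1 with rfl | rfl
  · exact c_ne_inl_mid le_rfl hk b h2
  · omega

/-- Neighbours of an interior handle vertex. -/
lemma neighbor_inr (hvw' : v ≠ w) (hk : 1 ≤ k) {i : Fin k} {z : V' ⊕ Fin k}
    (h : (handleGraph G' v w k).Adj z (.inr i)) :
    z = c v w k i.val ∨ z = c v w k (i.val + 2) := by
  match z with
  | .inl a =>
    rcases adj_inl_inr.1 h with ⟨rfl, hi⟩ | ⟨rfl, hi⟩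
    · left; rw [hi, c_zero]
    · right
      have : i.val + 2 = k + 1 := by omega
      rw [this, c_last]
  | .inr t =>
    rcases adj_inr_inr.1 h with hti | hti
    · left
      rw [show (i.val : ℕ) = t.val + 1 by omega, c_inr]
    · right
      rw [show i.val + 2 = t.val + 1 by omega, c_inr]

end Adj

section Orient

open Relation Sum Handle

variable {V' : Type*} {G' : SimpleGraph V'} {v w : V'} {k : ℕ}

/-- Restriction of an orientation of the handle graph to `G'`. -/
def restr (O : GraphOrientation (handleGraph G' v w k)) : GraphOrientation G' where
  dir a b := O.dir (.inl a) (.inl b)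
  consistent a b := by
    rw [← adj_inl_inl (G' := G') (v := v) (w := w) (k := k)]
    exact O.consistent _ _
  asymm a b := O.asymm _ _

lemma restr_dir (O : GraphOrientation (handleGraph G' v w k)) (a b : V') :
    (restr O).dir a b ↔ O.dir (.inl a) (.inl b) := Iff.rfl

lemma restr_acyclic {O : GraphOrientation (handleGraph G' v w k)} (hO : O.IsAcyclic) :
    (restr O).IsAcyclic := fun a ha =>
  hO (.inl a) (TransGen.lift (p := O.dir) Sum.inl (fun _ _ h => h) _ _ ha)

/-- The `j`-th handle-cycle edge is oriented forwards. -/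
def Fwd (O : GraphOrientation (handleGraph G' v w k)) (j : ℕ) : Prop :=
  O.dir (c v w k j) (c v w k (j+1))

lemma bwd_iff_not_fwd (hvw' : v ≠ w) (hk : 1 ≤ k)
    (O : GraphOrientation (handleGraph G' v w k)) {j : ℕ} (hj : j ≤ k) :
    O.dir (c v w k (j+1)) (c v w k j) ↔ ¬ Fwd O j := by
  constructor
  · intro h hF
    exact O.asymm _ _ hF h
  · intro h
    exact GO.dir_of_adj_not O (adj_c hvw' hk hj).symm h

lemma orient_ext (hvw' : v ≠ w) (hk : 1 ≤ k)
    {O₁ O₂ : GraphOrientation (handleGraph G' v w k)}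
    (hr : restr O₁ = restr O₂) (hf : ∀ j, j ≤ k → (Fwd O₁ j ↔ Fwd O₂ j)) : O₁ = O₂ := by
  have key : ∀ (P Q : GraphOrientation (handleGraph G' v w k)), restr P = restr Q →
      (∀ j, j ≤ k → (Fwd P j ↔ Fwd Q j)) → ∀ x y, P.dir x y → Q.dir x y := by
    intro P Q hr hf x y hd
    rcases edge_cases hvw' hk (GO.dir_adj P hd) with ⟨a, b, rfl, rfl, -⟩ |
      ⟨j, hj, ⟨rfl, rfl⟩ | ⟨rfl, rfl⟩⟩
    · have : (restr P).dir a b := hd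
      rw [hr] at this
      exact this
    · exact (hf j hj).1 hd
    · rw [bwd_iff_not_fwd hvw' hk P hj] at hd
      rw [bwd_iff_not_fwd hvw' hk Q hj]
      exact fun h => hd ((hf j hj).2 h)
  apply GO.ext'
  funext x y
  exact propext ⟨key O₁ O₂ hr hf x y, key O₂ O₁ hr.symm (fun j hj => (hf j hj).symm) x y⟩

/-- Extension of an orientation `r` of `G'` to the handle graph, with the `j`-th
handle edge oriented forwards iff `P j`. -/
def extO (hvw' : v ≠ w) (hk : 1 ≤ k) (r : GraphOrientation G') (P : ℕ → Prop) :
    GraphOrientation (handleGraph G' v w k) where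
  dir x y := (∃ a b, x = .inl a ∧ y = .inl b ∧ r.dir a b) ∨
    (∃ j, j ≤ k ∧ ((P j ∧ x = c v w k j ∧ y = c v w k (j+1)) ∨
      (¬ P j ∧ x = c v w k (j+1) ∧ y = c v w k j)))
  consistent := by
    intro x y
    constructor
    · intro h
      rcases edge_cases hvw' hk h with ⟨a, b, rfl, rfl, hab⟩ |
        ⟨j, hj, ⟨rfl, rfl⟩ | ⟨rfl, rfl⟩⟩
      · rcases (r.consistent a b).1 hab with h' | h'
        · exact Or.inl (Or.inl ⟨a, b, rfl, rfl, h'⟩)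
        · exact Or.inr (Or.inl ⟨b, a, rfl, rfl, h'⟩)
      · by_cases hP : P j
        · exact Or.inl (Or.inr ⟨j, hj, Or.inl ⟨hP, rfl, rfl⟩⟩)
        · exact Or.inr (Or.inr ⟨j, hj, Or.inr ⟨hP, rfl, rfl⟩⟩)
      · by_cases hP : P j
        · exact Or.inr (Or.inr ⟨j, hj, Or.inl ⟨hP, rfl, rfl⟩⟩)
        · exact Or.inl (Or.inr ⟨j, hj, Or.inr ⟨hP, rfl, rfl⟩⟩)
    · have key : ∀ x y : V' ⊕ Fin k, ((∃ a b, x = .inl a ∧ y = .inl b ∧ r.dir a b) ∨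
          (∃ j, j ≤ k ∧ ((P j ∧ x = c v w k j ∧ y = c v w k (j+1)) ∨
            (¬ P j ∧ x = c v w k (j+1) ∧ y = c v w k j)))) →
          (handleGraph G' v w k).Adj x y := by
        rintro x y (⟨a, b, rfl, rfl, hab⟩ | ⟨j, hj, ⟨-, rfl, rfl⟩ | ⟨-, rfl, rfl⟩⟩)
        · exact adj_inl_inl.2 (GO.dir_adj r hab)
        · exact adj_c hvw' hk hj
        · exact (adj_c hvw' hk hj).symm
      rintro (h | h)
      · exact key x y h
      · exact (key y x h).symm
  asymm := by
    rintro x y (⟨a, b, rfl, hy, hab⟩ | ⟨j, hj, ⟨hP, hxj, hyj⟩ | ⟨hP, hxj, hyj⟩⟩) h2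
    · rcases h2 with ⟨a', b', hy', hx', hab'⟩ | ⟨j', hj', ⟨hP', hyj', hxj'⟩ | ⟨hP', hyj', hxj'⟩⟩
      · rw [inl.injEq] at hx'
        subst hx'
        rw [hy] at hy'
        rw [inl.injEq] at hy'
        subst hy'
        exact r.asymm _ _ hab hab'
      · exact (c_not_both_inl hk hj' (hyj'.symm.trans hy) hxj'.symm).elim
      · exact (c_not_both_inl hk hj' hxj'.symm (hyj'.symm.trans hy)).elim
    · rcases h2 with ⟨a', b', hy', hx', hab'⟩ | ⟨j', hj', ⟨hP', hyj', hxj'⟩ | ⟨hP', hyj', hxj'⟩⟩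
      · exact (c_not_both_inl hk hj (hxj.symm.trans hx') (hyj.symm.trans hy')).elim
      · have e1 : j = j' + 1 := c_inj hvw' hk (by omega) (by omega) (hxj.symm.trans hxj')
        have e2 : j + 1 = j' := c_inj hvw' hk (by omega) (by omega) (hyj.symm.trans hyj')
        omega
      · have e1 : j = j' := c_inj hvw' hk (by omega) (by omega) (hxj.symm.trans hxj')
        exact hP' (e1 ▸ hP)
    · rcases h2 with ⟨a', b', hy', hx', hab'⟩ | ⟨j', hj', ⟨hP', hyj', hxj'⟩ | ⟨hP', hyj', hxj'⟩⟩
      · exact (c_not_both_inl hk hj (hyj.symm.trans hy') (hxj.symm.trans hx')).elim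
      · have e1 : j = j' := c_inj hvw' hk (by omega) (by omega)
          ((Nat.add_right_cancel_iff (n := 1)).mp
            (c_inj hvw' hk (by omega) (by omega) (hxj.symm.trans hxj')) ▸ rfl)
        exact hP ((e1 ▸ hP' : P j))
      · have e1 : j + 1 = j' := c_inj hvw' hk (by omega) (by omega) (hxj.symm.trans hxj')
        have e2 : j = j' + 1 := c_inj hvw' hk (by omega) (by omega) (hyj.symm.trans hyj')
        omega

lemma extO_dir (hvw' : v ≠ w) (hk : 1 ≤ k) (r : GraphOrientation G') (P : ℕ → Prop)
    (x y : V' ⊕ Fin k) :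
    (extO hvw' hk r P).dir x y ↔ ((∃ a b, x = .inl a ∧ y = .inl b ∧ r.dir a b) ∨
      (∃ j, j ≤ k ∧ ((P j ∧ x = c v w k j ∧ y = c v w k (j+1)) ∨
        (¬ P j ∧ x = c v w k (j+1) ∧ y = c v w k j)))) := Iff.rfl

lemma restr_extO (hvw' : v ≠ w) (hk : 1 ≤ k) (r : GraphOrientation G') (P : ℕ → Prop) :
    restr (extO hvw' hk r P) = r := by
  apply GO.ext'
  funext a b
  apply propext
  constructor
  · rintro (⟨a', b', ha, hb, hab⟩ | ⟨j, hj, ⟨-, hxj, hyj⟩ | ⟨-, hxj, hyj⟩⟩)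
    · rw [inl.injEq] at ha hb
      subst ha; subst hb
      exact hab
    · exact (c_not_both_inl hk hj hxj.symm hyj.symm).elim
    · exact (c_not_both_inl hk hj hyj.symm hxj.symm).elim
  · intro h
    exact Or.inl ⟨a, b, rfl, rfl, h⟩

lemma fwd_extO (hvw' : v ≠ w) (hk : 1 ≤ k) (r : GraphOrientation G') (P : ℕ → Prop)
    {j : ℕ} (hj : j ≤ k) : Fwd (extO hvw' hk r P) j ↔ P j := by
  constructor
  · rintro (⟨a, b, ha, hb, -⟩ | ⟨j', hj', ⟨hP, hxj, hyj⟩ | ⟨hP, hxj, hyj⟩⟩)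
    · exact (c_not_both_inl hk hj ha hb).elim
    · have : j = j' := c_inj hvw' hk (by omega) (by omega) hxj
      exact this ▸ hP
    · have e1 : j = j' + 1 := c_inj hvw' hk (by omega) (by omega) hxj
      have e2 : j + 1 = j' := c_inj hvw' hk (by omega) (by omega) hyj
      omega
  · intro h
    exact Or.inr ⟨j, hj, Or.inl ⟨h, rfl, rfl⟩⟩

end Orient

section Count

open Relation Sum Handle Finset
open scoped Classical

/-! Generic finset-counting helpers. -/

lemma filter_helper_erase {p q : ℕ → Prop} {n i : ℕ} (hi : i < n)
    (h : ∀ j, j < n → (q j ↔ (p j ∧ j ≠ i))) (hp : p i) :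
    ((range n).filter q).card + 1 = ((range n).filter p).card := by
  have hset : (range n).filter q = ((range n).filter p).erase i := by
    ext j
    simp only [mem_filter, mem_range, mem_erase]
    constructor
    · intro ⟨h1, h2⟩
      have := (h j h1).1 h2
      exact ⟨this.2, h1, this.1⟩
    · intro ⟨h1, h2, h3⟩
      exact ⟨h2, (h j h2).2 ⟨h3, h1⟩⟩
  rw [hset, card_erase_of_mem (by simp only [mem_filter, mem_range]; exact ⟨hi, hp⟩)]
  have hcard : 1 ≤ ((range n).filter p).card :=
    card_pos.2 ⟨i, by simp only [mem_filter, mem_range]; exact ⟨hi, hp⟩⟩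
  omega

lemma filter_helper_insert {p q : ℕ → Prop} {n i : ℕ} (hi : i < n)
    (h : ∀ j, j < n → (q j ↔ (p j ∨ j = i))) (hp : ¬ p i) :
    ((range n).filter q).card = ((range n).filter p).card + 1 := by
  have hset : (range n).filter q = insert i ((range n).filter p) := by
    ext j
    simp only [mem_filter, mem_range, mem_insert]
    constructor
    · intro ⟨h1, h2⟩
      rcases (h j h1).1 h2 with h' | rfl
      · exact Or.inr ⟨h1, h'⟩
      · exact Or.inl rfl
    · rintro (rfl | ⟨h1, h2⟩)
      · exact ⟨hi, (h _ hi).2 (Or.inr rfl)⟩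
      · exact ⟨h1, (h j h1).2 (Or.inl h2)⟩
  rw [hset, card_insert_of_notMem (by simp only [mem_filter, mem_range]; exact fun h' => hp h'.2)]

lemma filter_helper_swap {p q : ℕ → Prop} {n i : ℕ} (hi : i + 1 < n)
    (h : ∀ j, j < n → (q j ↔ ((p j ∧ j ≠ i + 1) ∨ j = i))) (hpi : ¬ p i) (hpi1 : p (i+1)) :
    ((range n).filter q).card = ((range n).filter p).card ∧
    ((range n).filter q).sum id + 1 = ((range n).filter p).sum id := by
  have hmem : i + 1 ∈ (range n).filter p := by
    simp only [mem_filter, mem_range]; exact ⟨hi, hpi1⟩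
  have hset : (range n).filter q = insert i (((range n).filter p).erase (i+1)) := by
    ext j
    simp only [mem_filter, mem_range, mem_insert, mem_erase]
    constructor
    · intro ⟨h1, h2⟩
      rcases (h j h1).1 h2 with ⟨h', h''⟩ | rfl
      · exact Or.inr ⟨h'', h1, h'⟩
      · exact Or.inl rfl
    · rintro (rfl | ⟨h1, h2, h3⟩)
      · exact ⟨by omega, (h _ (by omega)).2 (Or.inr rfl)⟩
      · exact ⟨h2, (h j h2).2 (Or.inl ⟨h3, h1⟩)⟩
  have hnotmem : i ∉ ((range n).filter p).erase (i+1) := by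
    simp only [mem_erase, mem_filter, mem_range]
    exact fun h' => hpi h'.2.2
  constructor
  · rw [hset, card_insert_of_notMem hnotmem, card_erase_of_mem hmem]
    have : 1 ≤ ((range n).filter p).card := card_pos.2 ⟨_, hmem⟩
    omega
  · rw [hset, sum_insert hnotmem]
    have h2 : (i+1) + (((range n).filter p).erase (i+1)).sum id =
        ((range n).filter p).sum id := Finset.add_sum_erase _ id hmem
    simp only [id] at h2 ⊢
    omega

lemma filter_lt_card {p₀ n : ℕ} (h : p₀ ≤ n) :
    ((range n).filter (fun j => j < p₀)).card = p₀ := by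
  have : (range n).filter (fun j => j < p₀) = range p₀ := by
    ext j
    simp only [mem_filter, mem_range]
    omega
  rw [this, card_range]

variable {V' : Type*} {G' : SimpleGraph V'} {v w : V'} {k : ℕ}

/-- Number of forward handle edges. -/
noncomputable def pO (O : GraphOrientation (handleGraph G' v w k)) : ℕ :=
  ((range (k+1)).filter (fun j => Fwd O j)).card

/-- Whether the shared edge is oriented `w → v`. -/
noncomputable def bO (O : GraphOrientation (handleGraph G' v w k)) : ℕ :=
  if O.dir (.inl w) (.inl v) then 1 else 0

/-- The circulation invariant of an orientation of the handle graph. -/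
noncomputable def nu (O : GraphOrientation (handleGraph G' v w k)) : ℕ := pO O + bO O

lemma pO_le (O : GraphOrientation (handleGraph G' v w k)) : pO O ≤ k + 1 := by
  have := card_filter_le (range (k+1)) (fun j => Fwd O j)
  rwa [card_range] at this

lemma pO_congr {O₁ O₂ : GraphOrientation (handleGraph G' v w k)}
    (h : ∀ j, j ≤ k → (Fwd O₁ j ↔ Fwd O₂ j)) : pO O₁ = pO O₂ := by
  unfold pO
  congr 1
  apply filter_congr
  intro j hj
  exact h j (by simpa using Nat.lt_succ_iff.1 (mem_range.1 hj))

lemma fwd_all_of_pO {O : GraphOrientation (handleGraph G' v w k)} (h : pO O = k+1) :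
    ∀ j, j ≤ k → Fwd O j := by
  intro j hj
  have : (range (k+1)).filter (fun j => Fwd O j) = range (k+1) := by
    apply eq_of_subset_of_card_le (filter_subset _ _)
    rw [card_range]
    exact h.ge
  have hmem : j ∈ (range (k+1)).filter (fun j => Fwd O j) := by
    rw [this]; exact mem_range.2 (by omega)
  exact (mem_filter.1 hmem).2

lemma not_fwd_all_of_pO {O : GraphOrientation (handleGraph G' v w k)} (h : pO O = 0) :
    ∀ j, j ≤ k → ¬ Fwd O j := by
  intro j hj hF
  have : j ∈ (range (k+1)).filter (fun j => Fwd O j) := by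
    simp only [mem_filter, mem_range]
    exact ⟨by omega, hF⟩
  rw [card_eq_zero.1 h] at this
  exact absurd this (notMem_empty j)

/-- If the forward set is downward closed, it is an initial segment of length `pO O`. -/
lemma sorted_iff {O : GraphOrientation (handleGraph G' v w k)}
    (hmono : ∀ i, i + 1 ≤ k → Fwd O (i+1) → Fwd O i) :
    ∀ j, j ≤ k → (Fwd O j ↔ j < pO O) := by
  have down : ∀ d i, i + d ≤ k → Fwd O (i + d) → Fwd O i := by
    intro d
    induction d with
    | zero => intro i _ h; exact h
    | succ d ih =>
      intro i hik hF
      have : Fwd O (i + 1) := ih (i+1) (by omega) (by rw [show i + 1 + d = i + (d+1) by omega]; exact hF)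
      exact hmono i (by omega) this
  set S := (range (k+1)).filter (fun j => Fwd O j) with hS
  rcases S.eq_empty_or_nonempty with hemp | hne
  · intro j hj
    have h0 : pO O = 0 := by rw [pO, ← hS, hemp, card_empty]
    rw [h0]
    simp only [Nat.not_lt_zero, iff_false]
    exact not_fwd_all_of_pO h0 j hj
  · set m := S.max' hne with hm
    have hmS : m ∈ S := S.max'_mem hne
    have hmk : m ≤ k ∧ Fwd O m := by
      have := mem_filter.1 hmS
      exact ⟨by have := mem_range.1 this.1; omega, this.2⟩
    have hSeq : S = range (m+1) := by
      ext i
      simp only [hS, mem_filter, mem_range]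
      constructor
      · intro hi
        have : i ≤ m := S.le_max' i (by simp only [hS, mem_filter, mem_range]; exact hi)
        omega
      · intro hi
        refine ⟨by omega, ?_⟩
        have : Fwd O (i + (m - i)) := by
          rw [show i + (m - i) = m by omega]
          exact hmk.2
        exact down (m - i) i (by omega) this
    have hpOm : pO O = m + 1 := by rw [pO, ← hS, hSeq, card_range]
    intro j hj
    rw [hpOm]
    constructor
    · intro hF
      have : j ∈ S := by simp only [hS, mem_filter, mem_range]; exact ⟨by omega, hF⟩
      rw [hSeq] at this
      exact mem_range.1 this
    · intro hjm
      have : j ∈ S := by rw [hSeq]; exact mem_range.2 hjm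
      exact (mem_filter.1 this).2

lemma pO_extO (hvw' : v ≠ w) (hk : 1 ≤ k) (r : GraphOrientation G') {p₀ : ℕ}
    (hp : p₀ ≤ k + 1) : pO (extO hvw' hk r (· < p₀)) = p₀ := by
  rw [pO]
  have : (range (k+1)).filter (fun j => Fwd (extO hvw' hk r (· < p₀)) j) =
      (range (k+1)).filter (fun j => j < p₀) := by
    apply filter_congr
    intro j hj
    exact fwd_extO hvw' hk r _ (by have := mem_range.1 hj; omega)
  rw [this, filter_lt_card hp]

end Count

section Acyc

open Relation Sum Handle Finset
open scoped Classical

variable {V' : Type*} {G' : SimpleGraph V'} {v w : V'} {k : ℕ}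

lemma chain_fwd (hvw' : v ≠ w) (hk : 1 ≤ k) {O : GraphOrientation (handleGraph G' v w k)}
    (h : ∀ j, j ≤ k → Fwd O j) : TransGen O.dir (.inl v) (.inl w) := by
  have aux : ∀ m, 1 ≤ m → m ≤ k + 1 → TransGen O.dir (c v w k 0) (c v w k m) := by
    intro m
    induction m with
    | zero => omega
    | succ m ih =>
      intro _ hm
      rcases Nat.eq_zero_or_pos m with rfl | hm1
      · exact TransGen.single (h 0 (by omega))
      · exact TransGen.tail (ih hm1 (by omega)) (h m (by omega))
  have := aux (k+1) (by omega) le_rfl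
  rwa [c_zero, c_last] at this

lemma chain_bwd (hvw' : v ≠ w) (hk : 1 ≤ k) {O : GraphOrientation (handleGraph G' v w k)}
    (h : ∀ j, j ≤ k → ¬ Fwd O j) : TransGen O.dir (.inl w) (.inl v) := by
  have aux : ∀ d, 1 ≤ d → d ≤ k + 1 → TransGen O.dir (c v w k (k+1)) (c v w k (k+1-d)) := by
    intro d
    induction d with
    | zero => omega
    | succ d ih =>
      intro _ hd
      rcases Nat.eq_zero_or_pos d with rfl | hd1
      · have : O.dir (c v w k (k+1)) (c v w k k) :=
          (bwd_iff_not_fwd hvw' hk O le_rfl).2 (h k le_rfl)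
        simpa using TransGen.single this
      · have step : O.dir (c v w k (k+1-d)) (c v w k (k-d)) := by
          have : O.dir (c v w k ((k-d)+1)) (c v w k (k-d)) :=
            (bwd_iff_not_fwd hvw' hk O (by omega)).2 (h (k-d) (by omega))
          rwa [show (k-d)+1 = k+1-d by omega] at this
        have := TransGen.tail (ih hd1 (by omega)) step
        rwa [show k-d = k+1-(d+1) by omega] at this
  have := aux (k+1) (by omega) le_rfl
  simp only [Nat.sub_self] at this
  rwa [c_zero, c_last] at this

lemma nu_pos (hvw : G'.Adj v w) (hk : 1 ≤ k) {O : GraphOrientation (handleGraph G' v w k)}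
    (hO : O.IsAcyclic) : 1 ≤ nu O := by
  by_contra hcon
  have hnu : pO O = 0 ∧ bO O = 0 := by unfold nu at hcon; omega
  have hdvw : O.dir (.inl v) (.inl w) := by
    apply GO.dir_of_adj_not O (adj_inl_inl.2 hvw)
    intro h
    simp [bO, h] at hnu
  have := chain_bwd hvw.ne hk (not_fwd_all_of_pO hnu.1)
  exact hO (.inl v) ((TransGen.single hdvw).trans this)

lemma nu_le (hvw : G'.Adj v w) (hk : 1 ≤ k) {O : GraphOrientation (handleGraph G' v w k)}
    (hO : O.IsAcyclic) : nu O ≤ k + 1 := by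
  by_contra hcon
  have hb : bO O ≤ 1 := by unfold bO; split_ifs <;> omega
  have hp : pO O = k + 1 ∧ bO O = 1 := by have := pO_le O; unfold nu at hcon; omega
  have hdwv : O.dir (.inl w) (.inl v) := by
    by_contra h
    simp [bO, h] at hp
  have := chain_fwd hvw.ne hk (fwd_all_of_pO hp.1)
  exact hO (.inl v) (this.tail hdwv)

/-- Generic rank-based acyclicity criterion for extensions. -/
lemma extO_rank (hvw' : v ≠ w) (hk : 1 ≤ k) (r : GraphOrientation G') (P : ℕ → Prop)
    (f : V' → ℕ) (g : ℕ → ℕ)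
    (hf : ∀ a b, r.dir a b → f a < f b)
    (h0 : P 0 → f v < g 1) (h0' : ¬ P 0 → g 1 < f v)
    (hk1 : P k → g k < f w) (hk2 : ¬ P k → f w < g k)
    (hmid : ∀ j, 1 ≤ j → j + 1 ≤ k → ((P j → g j < g (j+1)) ∧ (¬ P j → g (j+1) < g j))) :
    (extO hvw' hk r P).IsAcyclic := by
  apply acyclic_of_rank (ρ := Sum.elim f (fun i => g (i.val + 1)))
  have hρc : ∀ j, 1 ≤ j → j ≤ k → Sum.elim f (fun i : Fin k => g (i.val + 1)) (c v w k j) = g j := by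
    intro j h1 h2
    rw [c_mid j h1 h2]
    simp only [Sum.elim_inr]
    congr 1
    omega
  have hρ0 : Sum.elim f (fun i : Fin k => g (i.val + 1)) (c v w k 0) = f v := by
    rw [c_zero]; simp
  have hρlast : Sum.elim f (fun i : Fin k => g (i.val + 1)) (c v w k (k+1)) = f w := by
    rw [c_last]; simp
  rintro x y (⟨a, b, rfl, rfl, hab⟩ | ⟨j, hj, ⟨hP, rfl, rfl⟩ | ⟨hP, rfl, rfl⟩⟩)
  · exact hf a b hab
  · rcases Nat.eq_zero_or_pos j with rfl | hj1
    · rw [hρ0, hρc 1 le_rfl hk]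
      exact h0 hP
    · rcases Nat.lt_or_ge j k with hj2 | hj2
      · rw [hρc j hj1 hj, hρc (j+1) (by omega) (by omega)]
        exact (hmid j hj1 (by omega)).1 hP
      · have hjk : j = k := by omega
        rw [hjk, hρc k (by omega) le_rfl, hρlast]
        exact hk1 (hjk ▸ hP)
  · rcases Nat.eq_zero_or_pos j with rfl | hj1
    · rw [hρ0, hρc 1 le_rfl hk]
      exact h0' hP
    · rcases Nat.lt_or_ge j k with hj2 | hj2
      · rw [hρc j hj1 hj, hρc (j+1) (by omega) (by omega)]
        exact (hmid j hj1 (by omega)).2 hP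
      · have hjk : j = k := by omega
        rw [hjk, hρc k (by omega) le_rfl, hρlast]
        exact hk2 (hjk ▸ hP)

lemma mul_lt_mul_left'' (c a b : ℕ) (h : a < b) (hc : 0 < c) : c * a < c * b := by
  have h1 : c * (a+1) ≤ c * b := Nat.mul_le_mul_left c h
  have h2 : c * (a+1) = c * a + c := by ring
  omega

lemma extO_acyclic [Fintype V'] (hvw' : v ≠ w) (hk : 1 ≤ k) {r : GraphOrientation G'}
    (hr : r.IsAcyclic) {p₀ : ℕ}
    (h0 : p₀ = 0 → ¬ TransGen r.dir v w) (h1 : k + 1 ≤ p₀ → ¬ TransGen r.dir w v) :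
    (extO hvw' hk r (· < p₀)).IsAcyclic := by
  rcases Nat.eq_zero_or_pos p₀ with rfl | hp1
  · -- all backwards; augment r with w → v
    obtain ⟨ρq, hρq⟩ := exists_rank
      (aug_acyclic (d := r.dir) hr w v (Ne.symm hvw') (h0 rfl))
    have hq : ρq w < ρq v := hρq w v (Or.inr ⟨rfl, rfl⟩)
    have hexp : (k+2) * (ρq w + 1) = (k+2) * ρq w + (k+2) := by ring
    have hmul : (k+2) * (ρq w + 1) ≤ (k+2) * ρq v := Nat.mul_le_mul_left _ (by omega)
    apply extO_rank hvw' hk r _ (fun a => (k+2) * ρq a) (fun m => (k+2) * ρq w + (k+1-m))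
    · intro a b hab
      exact mul_lt_mul_left'' _ _ _ (hρq a b (Or.inl hab)) (by omega)
    · intro h; beta_reduce; omega
    · intro _; beta_reduce; omega
    · intro h; beta_reduce; omega
    · intro _; beta_reduce; omega
    · intro j h1' h2'; constructor <;> intro <;> beta_reduce <;> omega
  rcases Nat.lt_or_ge k p₀ with hp2 | hp2
  · -- all forwards; augment r with v → w
    obtain ⟨ρq, hρq⟩ := exists_rank
      (aug_acyclic (d := r.dir) hr v w hvw' (h1 (by omega)))
    have hq : ρq v < ρq w := hρq v w (Or.inr ⟨rfl, rfl⟩)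
    have hexp : (k+2) * (ρq v + 1) = (k+2) * ρq v + (k+2) := by ring
    have hmul : (k+2) * (ρq v + 1) ≤ (k+2) * ρq w := Nat.mul_le_mul_left _ (by omega)
    apply extO_rank hvw' hk r _ (fun a => (k+2) * ρq a) (fun m => (k+2) * ρq v + m)
    · intro a b hab
      exact mul_lt_mul_left'' _ _ _ (hρq a b (Or.inl hab)) (by omega)
    · intro _; beta_reduce; omega
    · intro h; beta_reduce; omega
    · intro _; beta_reduce; omega
    · intro h; beta_reduce; omega
    · intro j h1' h2'; constructor <;> intro <;> beta_reduce <;> omega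
  · -- 1 ≤ p₀ ≤ k; a middle sink
    obtain ⟨ρ', hρ'⟩ := exists_rank (d := r.dir) hr
    set M := (k+2) * (Finset.univ.sup ρ' + 1) with hM
    have hbound : ∀ a, (k+2) * ρ' a < M := by
      intro a
      have hle : ρ' a ≤ Finset.univ.sup ρ' := Finset.le_sup (Finset.mem_univ a)
      have h1 : (k+2) * ρ' a ≤ (k+2) * Finset.univ.sup ρ' := Nat.mul_le_mul_left _ hle
      have h2 : (k+2) * Finset.univ.sup ρ' < (k+2) * (Finset.univ.sup ρ' + 1) :=
        mul_lt_mul_left'' _ _ _ (by omega) (by omega)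
      omega
    have hv := hbound v
    have hw := hbound w
    apply extO_rank hvw' hk r _ (fun a => (k+2) * ρ' a)
      (fun m => if m < p₀ then M + m else if m = p₀ then M + 2*k+2 else M + (k+2) - m)
    · intro a b hab
      exact mul_lt_mul_left'' _ _ _ (hρ' a b hab) (by omega)
    · intro _
      beta_reduce
      split_ifs <;> omega
    · intro h; beta_reduce; omega
    · intro h; beta_reduce; omega
    · intro _
      beta_reduce
      split_ifs <;> omega
    · intro j h1' h2'
      constructor <;> intro hPj <;> beta_reduce <;> split_ifs <;> omega

variable (v w) in
/-- Number of forward edges of the canonical representative with invariant `ν`. -/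
noncomputable def canonP (r : GraphOrientation G') (ν : ℕ) : ℕ :=
  ν - (if r.dir w v then 1 else 0)

/-- The canonical extension of `r` with invariant `ν`. -/
noncomputable def canon (hvw' : v ≠ w) (hk : 1 ≤ k) (r : GraphOrientation G') (ν : ℕ) :
    GraphOrientation (handleGraph G' v w k) :=
  extO hvw' hk r (· < canonP v w r ν)

lemma restr_canon (hvw' : v ≠ w) (hk : 1 ≤ k) (r : GraphOrientation G') (ν : ℕ) :
    restr (canon hvw' hk r ν) = r := restr_extO hvw' hk r _

lemma pO_canon (hvw' : v ≠ w) (hk : 1 ≤ k) (r : GraphOrientation G') {ν : ℕ} (hν : ν ≤ k+1) :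
    pO (canon hvw' hk r ν) = canonP v w r ν := by
  apply pO_extO hvw' hk r
  unfold canonP
  omega

lemma bO_canon (hvw' : v ≠ w) (hk : 1 ≤ k) (r : GraphOrientation G') (ν : ℕ) :
    bO (canon hvw' hk r ν) = if r.dir w v then 1 else 0 := by
  have hiff : (canon hvw' hk r ν).dir (.inl w) (.inl v) ↔ r.dir w v := by
    conv_rhs => rw [← restr_canon hvw' hk r ν]
    exact Iff.rfl
  unfold bO
  split_ifs with h1 h2 h2
  · rfl
  · exact absurd (hiff.1 h1) h2
  · exact absurd (hiff.2 h2) h1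
  · rfl

lemma nu_canon (hvw' : v ≠ w) (hk : 1 ≤ k) (r : GraphOrientation G') {ν : ℕ}
    (hν1 : 1 ≤ ν) (hν2 : ν ≤ k+1) : nu (canon hvw' hk r ν) = ν := by
  rw [nu, pO_canon hvw' hk r hν2, bO_canon hvw' hk r ν]
  unfold canonP
  split_ifs <;> omega

lemma canon_acyclic [Fintype V'] (hvw : G'.Adj v w) (hvw' : v ≠ w) (hk : 1 ≤ k)
    {r : GraphOrientation G'}
    (hr : r.IsAcyclic) {ν : ℕ} (hν1 : 1 ≤ ν) (hν2 : ν ≤ k+1) :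
    (canon hvw' hk r ν).IsAcyclic := by
  apply extO_acyclic hvw' hk hr
  · intro hp htrans
    have hb : r.dir w v := by
      unfold canonP at hp
      split_ifs at hp with h
      · exact h
      · omega
    exact hr v (htrans.tail hb)
  · intro hp htrans
    have hb : ¬ r.dir w v := by
      unfold canonP at hp
      split_ifs at hp with h
      · omega
      · exact h
    have hvwdir : r.dir v w := by
      rcases (r.consistent v w).1 hvw with h | h
      · exact h
      · exact absurd h hb
    exact hr v (TransGen.head hvwdir htrans)

end Acyc

section ClickEffect

open Relation Sum Handle Finset
open scoped Classical

variable {V' : Type*} {G' : SimpleGraph V'} {v w : V'} {k : ℕ}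

lemma c_ne_inl_v (hvw' : v ≠ w) (hk : 1 ≤ k) {m : ℕ} (h1 : 1 ≤ m) (h2 : m ≤ k+1) :
    c v w k m ≠ .inl v := by
  rcases Nat.lt_or_ge m (k+1) with hm | hm
  · exact c_ne_inl_mid h1 (by omega) v
  · have : m = k+1 := by omega
    rw [this, c_last]
    simp only [ne_eq, inl.injEq]
    exact fun h => hvw' h.symm

lemma c_ne_inl_w (hvw' : v ≠ w) (hk : 1 ≤ k) {m : ℕ} (h2 : m ≤ k) :
    c v w k m ≠ .inl w := by
  rcases Nat.eq_zero_or_pos m with rfl | h1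
  · rw [c_zero]
    simp only [ne_eq, inl.injEq]
    exact hvw'
  · exact c_ne_inl_mid h1 h2 w

lemma c_ne_inl_of_ne (hvw' : v ≠ w) (hk : 1 ≤ k) {a : V'} (hav : a ≠ v) (haw : a ≠ w)
    {m : ℕ} (h2 : m ≤ k+1) : c v w k m ≠ .inl a := by
  intro h
  rcases c_eq_inl h2 h with rfl | rfl
  · rw [c_zero] at h; exact hav (by simpa using h.symm)
  · rw [c_last] at h; exact haw (by simpa using h.symm)

lemma bO_congr {O₁ O₂ : GraphOrientation (handleGraph G' v w k)}
    (h : O₁.dir (.inl w) (.inl v) ↔ O₂.dir (.inl w) (.inl v)) : bO O₁ = bO O₂ := by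
  unfold bO
  split_ifs with h1 h2 h2 <;> first | rfl | exact absurd (h.1 h1) h2 | exact absurd (h.2 h2) h1

lemma restr_clickAt_inl (O : GraphOrientation (handleGraph G' v w k)) (a : V') :
    restr (clickAt O (.inl a)) = clickAt (restr O) a := by
  apply GO.ext'
  funext s t
  apply propext
  show (clickAt O (.inl a)).dir (.inl s) (.inl t) ↔ _
  rw [clickAt_dir, clickAt_dir]
  simp only [inl.injEq, ne_eq]
  exact Iff.rfl

/-- Source-to-sink at an inner vertex of `G'`. -/
lemma click_inl_other (hvw : G'.Adj v w) (hk : 1 ≤ k)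
    (O : GraphOrientation (handleGraph G' v w k)) {a : V'} (hav : a ≠ v) (haw : a ≠ w) :
    nu (clickAt O (.inl a)) = nu O := by
  have hvw' := hvw.ne
  have hne : ∀ m, m ≤ k + 1 → c v w k m ≠ .inl a := fun m hm => c_ne_inl_of_ne hvw' hk hav haw hm
  have hpO : pO (clickAt O (.inl a)) = pO O := by
    apply pO_congr
    intro j hj
    exact clickAt_dir_of_ne (hne j (by omega)) (hne (j+1) (by omega))
  have hbO : bO (clickAt O (.inl a)) = bO O := by
    apply bO_congr
    exact clickAt_dir_of_ne
      (by simp only [ne_eq, inl.injEq]; exact fun h => haw h.symm)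
      (by simp only [ne_eq, inl.injEq]; exact fun h => hav h.symm)
  rw [nu, nu, hpO, hbO]

/-- Source-to-sink at `v`. -/
lemma click_inl_v (hvw : G'.Adj v w) (hk : 1 ≤ k)
    (O : GraphOrientation (handleGraph G' v w k)) (hsrc : ∀ u, ¬ O.dir u (.inl v)) :
    nu (clickAt O (.inl v)) = nu O := by
  have hvw' := hvw.ne
  have hF0 : Fwd O 0 := by
    apply GO.dir_of_adj_not O (adj_c hvw' hk (by omega))
    rw [c_zero]
    exact hsrc _
  have hb0 : bO O = 0 := by
    unfold bO
    rw [if_neg (hsrc (.inl w))]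
  have hvwdir : O.dir (.inl v) (.inl w) :=
    GO.dir_of_adj_not O (adj_inl_inl.2 hvw) (hsrc (.inl w))
  have hb1 : bO (clickAt O (.inl v)) = 1 := by
    unfold bO
    rw [if_pos]
    rw [clickAt_dir_right (by simp only [ne_eq, inl.injEq]; exact fun h => hvw' h.symm)]
    exact hvwdir
  have hpO : pO (clickAt O (.inl v)) + 1 = pO O := by
    apply filter_helper_erase (i := 0) (by omega)
    · intro j hj
      rcases Nat.eq_zero_or_pos j with rfl | hj1
      · constructor
        · intro hF
          exact absurd (by rwa [show Fwd (clickAt O (.inl v)) 0 = (clickAt O (.inl v)).dir (c v w k 0) (c v w k 1) from rfl, c_zero] at hF)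
            (clickAt_dir_left hsrc)
        · rintro ⟨-, h⟩
          exact absurd rfl h
      · have e1 : c v w k j ≠ .inl v := c_ne_inl_v hvw' hk hj1 (by omega)
        have e2 : c v w k (j+1) ≠ .inl v := c_ne_inl_v hvw' hk (by omega) (by omega)
        rw [show Fwd (clickAt O (.inl v)) j ↔ Fwd O j from clickAt_dir_of_ne e1 e2]
        constructor
        · intro h; exact ⟨h, by omega⟩
        · rintro ⟨h, -⟩; exact h
    · exact hF0
  rw [nu, nu, hb0, hb1]
  omega

/-- Source-to-sink at `w`. -/
lemma click_inl_w (hvw : G'.Adj v w) (hk : 1 ≤ k)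
    (O : GraphOrientation (handleGraph G' v w k)) (hsrc : ∀ u, ¬ O.dir u (.inl w)) :
    nu (clickAt O (.inl w)) = nu O := by
  have hvw' := hvw.ne
  have hBk : ¬ Fwd O k := by
    intro hF
    rw [show Fwd O k = O.dir (c v w k k) (c v w k (k+1)) from rfl, c_last] at hF
    exact hsrc _ hF
  have hwv : O.dir (.inl w) (.inl v) :=
    GO.dir_of_adj_not O (adj_inl_inl.2 hvw.symm) (hsrc (.inl v))
  have hb1 : bO O = 1 := by
    unfold bO
    rw [if_pos hwv]
  have hb0 : bO (clickAt O (.inl w)) = 0 := by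
    unfold bO
    rw [if_neg (clickAt_dir_left hsrc)]
  have hpO : pO (clickAt O (.inl w)) = pO O + 1 := by
    apply filter_helper_insert (i := k) (by omega)
    · intro j hj
      rcases Nat.lt_or_ge j k with hjk | hjk
      · have e1 : c v w k j ≠ .inl w := c_ne_inl_w hvw' hk (by omega)
        have e2 : c v w k (j+1) ≠ .inl w := c_ne_inl_w hvw' hk (by omega)
        rw [show Fwd (clickAt O (.inl w)) j ↔ Fwd O j from clickAt_dir_of_ne e1 e2]
        constructor
        · exact fun h => Or.inl h
        · rintro (h | h)
          · exact h
          · omega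
      · have hjeq : j = k := by omega
        rw [hjeq]
        have hbwd : O.dir (c v w k (k+1)) (c v w k k) := (bwd_iff_not_fwd hvw' hk O le_rfl).2 hBk
        rw [c_last] at hbwd
        constructor
        · intro _; exact Or.inr rfl
        · intro _
          rw [show Fwd (clickAt O (.inl w)) k = (clickAt O (.inl w)).dir (c v w k k) (c v w k (k+1)) from rfl, c_last]
          rw [clickAt_dir_right (c_ne_inl_w hvw' hk le_rfl)]
          exact hbwd
    · exact hBk
  rw [nu, nu, hb0, hb1, hpO]

/-- Source-to-sink at an interior handle vertex. -/
lemma click_inr (hvw : G'.Adj v w) (hk : 1 ≤ k)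
    (O : GraphOrientation (handleGraph G' v w k)) (i : Fin k)
    (hsrc : ∀ u, ¬ O.dir u (.inr i)) :
    restr (clickAt O (.inr i)) = restr O ∧ nu (clickAt O (.inr i)) = nu O ∧
    ((range (k+1)).filter (fun j => Fwd (clickAt O (.inr i)) j)).sum id + 1 =
      ((range (k+1)).filter (fun j => Fwd O j)).sum id := by
  have hvw' := hvw.ne
  have hbwd : ¬ Fwd O i.val := by
    intro hF
    rw [show Fwd O i.val = O.dir (c v w k i.val) (c v w k (i.val+1)) from rfl, c_inr] at hF
    exact hsrc _ hF
  have hfwd : Fwd O (i.val + 1) := by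
    apply GO.dir_of_adj_not O (adj_c hvw' hk (by omega))
    rw [c_inr]
    exact hsrc _
  have hrestr : restr (clickAt O (.inr i)) = restr O := by
    apply GO.ext'
    funext s t
    apply propext
    exact clickAt_dir_of_ne (by simp) (by simp)
  have hfwds : ∀ j, j < k + 1 →
      (Fwd (clickAt O (.inr i)) j ↔ ((Fwd O j ∧ j ≠ i.val + 1) ∨ j = i.val)) := by
    intro j hj
    rcases eq_or_ne j i.val with hji | hji
    · rw [hji]
      have e1 : c v w k i.val ≠ .inr i := by
        rw [← c_inr (v := v) (w := w) i]
        intro h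
        have := c_inj hvw' hk (by omega) (by omega) h
        omega
      constructor
      · intro _; exact Or.inr rfl
      · intro _
        rw [show Fwd (clickAt O (.inr i)) i.val =
          (clickAt O (.inr i)).dir (c v w k i.val) (c v w k (i.val+1)) from rfl, c_inr]
        rw [clickAt_dir_right e1]
        rw [← c_inr (v := v) (w := w) i]
        exact (bwd_iff_not_fwd hvw' hk O (by omega)).2 hbwd
    · rcases eq_or_ne j (i.val + 1) with hji1 | hji1
      · rw [hji1]
        constructor
        · intro hF
          rw [show Fwd (clickAt O (.inr i)) (i.val+1) =
            (clickAt O (.inr i)).dir (c v w k (i.val+1)) (c v w k (i.val+2)) from rfl, c_inr] at hF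
          exact absurd hF (clickAt_dir_left hsrc)
        · rintro (⟨-, h⟩ | h)
          · exact absurd rfl h
          · omega
      · have e1 : c v w k j ≠ .inr i := by
          rw [← c_inr (v := v) (w := w) i]
          intro h
          have := c_inj hvw' hk (by omega) (by omega) h
          omega
        have e2 : c v w k (j+1) ≠ .inr i := by
          rw [← c_inr (v := v) (w := w) i]
          intro h
          have := c_inj hvw' hk (by omega) (by omega) h
          omega
        rw [show Fwd (clickAt O (.inr i)) j ↔ Fwd O j from clickAt_dir_of_ne e1 e2]
        constructor
        · intro h; exact Or.inl ⟨h, hji1⟩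
        · rintro (⟨h, -⟩ | h)
          · exact h
          · exact absurd h hji
  have hswap := filter_helper_swap (p := fun j => Fwd O j)
    (q := fun j => Fwd (clickAt O (.inr i)) j) (i := i.val) (n := k+1) (by omega)
    (by intro j hj; exact (hfwds j hj).trans (by tauto)) hbwd hfwd
  refine ⟨hrestr, ?_, hswap.2⟩
  have hbO : bO (clickAt O (.inr i)) = bO O := by
    apply bO_congr
    exact clickAt_dir_of_ne (by simp) (by simp)
  rw [nu, nu, hbO, show pO (clickAt O (.inr i)) = pO O from hswap.1]

/-- If `v` is a source of the restriction and the first handle edge points away from `v`,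
then `v` is a source. -/
lemma source_inl_v_of (hvw : G'.Adj v w) (hk : 1 ≤ k)
    (O : GraphOrientation (handleGraph G' v w k)) (hsrc' : ∀ u, ¬ (restr O).dir u v)
    (hF0 : Fwd O 0) : ∀ u, ¬ O.dir u (.inl v) := by
  have hvw' := hvw.ne
  intro u hdu
  match u with
  | .inl a => exact hsrc' a hdu
  | .inr t =>
    have hadj := GO.dir_adj O hdu
    rcases adj_inl_inr.1 hadj.symm with ⟨-, ht⟩ | ⟨hvw2, -⟩
    · have : (.inr t : V' ⊕ Fin k) = c v w k 1 := by
        rw [← c_inr (v := v) (w := w) t, ht]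
      rw [this] at hdu
      rw [show Fwd O 0 = O.dir (c v w k 0) (c v w k 1) from rfl] at hF0
      rw [← c_zero (v := v) (w := w) (k := k)] at hdu
      exact O.asymm _ _ hF0 hdu
    · exact hvw' hvw2

/-- If `w` is a source of the restriction and the last handle edge points away from `w`,
then `w` is a source. -/
lemma source_inl_w_of (hvw : G'.Adj v w) (hk : 1 ≤ k)
    (O : GraphOrientation (handleGraph G' v w k)) (hsrc' : ∀ u, ¬ (restr O).dir u w)
    (hBk : ¬ Fwd O k) : ∀ u, ¬ O.dir u (.inl w) := by
  have hvw' := hvw.ne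
  intro u hdu
  match u with
  | .inl a => exact hsrc' a hdu
  | .inr t =>
    have hadj := GO.dir_adj O hdu
    rcases adj_inl_inr.1 hadj.symm with ⟨hwv2, -⟩ | ⟨-, ht⟩
    · exact hvw' hwv2.symm
    · have : (.inr t : V' ⊕ Fin k) = c v w k k := by
        rw [← c_inr (v := v) (w := w) t, ht]
        congr 1
        omega
      rw [this] at hdu
      apply hBk
      rw [show Fwd O k = O.dir (c v w k k) (c v w k (k+1)) from rfl, c_last]
      exact hdu

/-- If `a ∉ {v, w}` is a source of the restriction, then it is a source. -/
lemma source_inl_other_of (hvw : G'.Adj v w) (hk : 1 ≤ k)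
    (O : GraphOrientation (handleGraph G' v w k)) {a : V'} (hav : a ≠ v) (haw : a ≠ w)
    (hsrc' : ∀ u, ¬ (restr O).dir u a) : ∀ u, ¬ O.dir u (.inl a) := by
  intro u hdu
  match u with
  | .inl b => exact hsrc' b hdu
  | .inr t =>
    have hadj := GO.dir_adj O hdu
    rcases adj_inl_inr.1 hadj.symm with ⟨h, -⟩ | ⟨h, -⟩
    · exact hav h
    · exact haw h

/-- If the `i`-th handle edge points backwards and the `(i+1)`-st forwards, the interior
vertex between them is a source. -/
lemma source_inr_of (hvw : G'.Adj v w) (hk : 1 ≤ k)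
    (O : GraphOrientation (handleGraph G' v w k)) (i : Fin k)
    (hbwd : ¬ Fwd O i.val) (hfwd : Fwd O (i.val + 1)) : ∀ u, ¬ O.dir u (.inr i) := by
  have hvw' := hvw.ne
  intro u hdu
  rcases neighbor_inr hvw' hk (GO.dir_adj O hdu) with h | h
  · subst h
    apply hbwd
    rw [show Fwd O i.val = O.dir (c v w k i.val) (c v w k (i.val+1)) from rfl, c_inr]
    exact hdu
  · subst h
    rw [show ((.inr i) : V' ⊕ Fin k) = c v w k (i.val+1) from (c_inr i).symm] at hdu
    rw [show Fwd O (i.val+1) = O.dir (c v w k (i.val+1)) (c v w k (i.val+2)) from rfl] at hfwd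
    exact O.asymm _ _ hfwd hdu

end ClickEffect

section Sorting

open Relation Sum Handle Finset
open scoped Classical

variable {V' : Type*} {G' : SimpleGraph V'} {v w : V'} {k : ℕ}

lemma canonP_restr (O : GraphOrientation (handleGraph G' v w k)) :
    canonP v w (restr O) (nu O) = pO O := by
  unfold canonP nu bO
  by_cases h : O.dir (.inl w) (.inl v)
  · rw [if_pos h, if_pos (show (restr O).dir w v from h)]
    omega
  · rw [if_neg h, if_neg (show ¬ (restr O).dir w v from h)]
    omega

lemma sorting [Fintype V'] (hvw : G'.Adj v w) (hk : 1 ≤ k) :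
    ∀ (n : ℕ) (A : AcycGraphOrientation (handleGraph G' v w k))
      (pf : (canon hvw.ne hk (restr A.1) (nu A.1)).IsAcyclic),
      ((range (k+1)).filter (fun j => Fwd A.1 j)).sum id ≤ n →
      Quot.mk (fun A B : AcycGraphOrientation (handleGraph G' v w k) => Click A.1 B.1) A =
      Quot.mk _ ⟨canon hvw.ne hk (restr A.1) (nu A.1), pf⟩ := by
  intro n
  induction n using Nat.strong_induction_on with
  | _ n ih =>
    intro A pf hn
    by_cases hsorted : ∀ i, i + 1 ≤ k → Fwd A.1 (i+1) → Fwd A.1 i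
    · have heq : A.1 = canon hvw.ne hk (restr A.1) (nu A.1) := by
        apply orient_ext hvw.ne hk
        · rw [restr_canon]
        · intro j hj
          unfold canon
          rw [fwd_extO hvw.ne hk _ _ hj, canonP_restr]
          exact sorted_iff hsorted j hj
      exact congrArg _ (Subtype.ext heq)
    · push_neg at hsorted
      obtain ⟨i, hik, hFi1, hnFi⟩ := hsorted
      set fi : Fin k := ⟨i, by omega⟩ with hfi
      have hsrcfi : ∀ u, ¬ A.1.dir u (.inr fi) :=
        source_inr_of hvw hk A.1 fi (by simpa [hfi] using hnFi) (by simpa [hfi] using hFi1)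
      set B : AcycGraphOrientation (handleGraph G' v w k) :=
        ⟨clickAt A.1 (.inr fi), clickAt_acyclic hsrcfi A.2⟩ with hB
      obtain ⟨hrestr, hnu, hsum⟩ := click_inr hvw hk A.1 fi hsrcfi
      have pf2 : (canon hvw.ne hk (restr B.1) (nu B.1)).IsAcyclic := by
        rw [show restr B.1 = restr A.1 from hrestr, show nu B.1 = nu A.1 from hnu]
        exact pf
      have hlt0 : ((range (k+1)).filter
          (fun j => Fwd (clickAt A.1 (.inr fi)) j)).sum id < n := by omega
      have hlt : ((range (k+1)).filter (fun j => Fwd B.1 j)).sum id < n := hlt0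
      have step1 : Quot.mk (fun A B : AcycGraphOrientation (handleGraph G' v w k) =>
          Click A.1 B.1) A = Quot.mk _ B :=
        Quot.sound (click_clickAt A.1 (.inr fi) hsrcfi)
      have step2 := ih _ hlt B pf2 le_rfl
      have step3 : (⟨canon hvw.ne hk (restr B.1) (nu B.1), pf2⟩ :
          AcycGraphOrientation (handleGraph G' v w k)) =
          ⟨canon hvw.ne hk (restr A.1) (nu A.1), pf⟩ := by
        apply Subtype.ext
        simp only
        rw [show restr B.1 = restr A.1 from hrestr, show nu B.1 = nu A.1 from hnu]
      exact step1.trans (step2.trans (congrArg _ step3))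

lemma canon_click [Fintype V'] (hvw : G'.Adj v w) (hk : 1 ≤ k)
    {r₁ r₂ : GraphOrientation G'} (h1 : r₁.IsAcyclic) (h2 : r₂.IsAcyclic)
    (hcl : Click r₁ r₂) {ν : ℕ} (hν1 : 1 ≤ ν) (hν2 : ν ≤ k+1)
    (pf1 : (canon hvw.ne hk r₁ ν).IsAcyclic) (pf2 : (canon hvw.ne hk r₂ ν).IsAcyclic) :
    Quot.mk (fun A B : AcycGraphOrientation (handleGraph G' v w k) => Click A.1 B.1)
      ⟨canon hvw.ne hk r₁ ν, pf1⟩ = Quot.mk _ ⟨canon hvw.ne hk r₂ ν, pf2⟩ := by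
  obtain ⟨x, hxsrc, hr2⟩ := Click.eq_clickAt hcl
  set O₁ := canon hvw.ne hk r₁ ν with hO₁
  have hrestr1 : restr O₁ = r₁ := restr_canon hvw.ne hk r₁ ν
  have hsrc : ∀ u, ¬ O₁.dir u (.inl x) := by
    by_cases hxv : x = v
    · subst x
      apply source_inl_v_of hvw hk O₁ (by rw [hrestr1]; exact hxsrc)
      have hbO : ¬ r₁.dir w v := hxsrc w
      unfold O₁
      unfold canon
      rw [fwd_extO hvw.ne hk _ _ (by omega : 0 ≤ k)]
      unfold canonP
      rw [if_neg hbO]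
      omega
    · by_cases hxw : x = w
      · subst x
        apply source_inl_w_of hvw hk O₁ (by rw [hrestr1]; exact hxsrc)
        have hb : r₁.dir w v := GO.dir_of_adj_not r₁ hvw.symm (hxsrc v)
        unfold O₁
        unfold canon
        rw [fwd_extO hvw.ne hk _ _ (le_refl k)]
        unfold canonP
        rw [if_pos hb]
        omega
      · exact source_inl_other_of hvw hk O₁ hxv hxw (by rw [hrestr1]; exact hxsrc)
  set O₂ := clickAt O₁ (.inl x) with hO₂
  have hacyc2 : O₂.IsAcyclic := clickAt_acyclic hsrc pf1
  have hnu2 : nu O₂ = ν := by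
    have hν : nu O₁ = ν := nu_canon hvw.ne hk r₁ hν1 hν2
    by_cases hxv : x = v
    · subst x; rw [← hν]; exact click_inl_v hvw hk O₁ hsrc
    · by_cases hxw : x = w
      · subst x; rw [← hν]; exact click_inl_w hvw hk O₁ hsrc
      · rw [← hν]; exact click_inl_other hvw hk O₁ hxv hxw
  have hrestr2 : restr O₂ = r₂ := by
    rw [hO₂, restr_clickAt_inl, hrestr1, hr2]
  have pfB : (canon hvw.ne hk (restr O₂) (nu O₂)).IsAcyclic := by
    rw [hrestr2, hnu2]; exact pf2
  have step1 : Quot.mk (fun A B : AcycGraphOrientation (handleGraph G' v w k) =>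
      Click A.1 B.1) ⟨O₁, pf1⟩ = Quot.mk _ ⟨O₂, hacyc2⟩ :=
    Quot.sound (click_clickAt O₁ (.inl x) hsrc)
  have step2 := sorting hvw hk _ ⟨O₂, hacyc2⟩ pfB le_rfl
  have step3 : (⟨canon hvw.ne hk (restr O₂) (nu O₂), pfB⟩ :
      AcycGraphOrientation (handleGraph G' v w k)) = ⟨canon hvw.ne hk r₂ ν, pf2⟩ := by
    apply Subtype.ext
    simp only
    rw [hrestr2, hnu2]
  exact step1.trans (step2.trans (congrArg _ step3))

lemma eqv_canon [Fintype V'] (hvw : G'.Adj v w) (hk : 1 ≤ k) {ν : ℕ}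
    (hν1 : 1 ≤ ν) (hν2 : ν ≤ k+1) (A B : AcycGraphOrientation G')
    (h : Relation.EqvGen (fun A B : AcycGraphOrientation G' => Click A.1 B.1) A B)
    (pfA : (canon hvw.ne hk A.1 ν).IsAcyclic) (pfB : (canon hvw.ne hk B.1 ν).IsAcyclic) :
    Quot.mk (fun A B : AcycGraphOrientation (handleGraph G' v w k) => Click A.1 B.1)
      ⟨canon hvw.ne hk A.1 ν, pfA⟩ = Quot.mk _ ⟨canon hvw.ne hk B.1 ν, pfB⟩ := by
  induction h with
  | rel a b hab =>
    exact canon_click hvw hk a.2 b.2 hab hν1 hν2 _ _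
  | refl a => rfl
  | symm a b hab ih =>
    exact (ih (canon_acyclic hvw hvw.ne hk a.2 hν1 hν2) (canon_acyclic hvw hvw.ne hk b.2 hν1 hν2)).symm
  | trans a b c hab hbc ih1 ih2 =>
    have pfb : (canon hvw.ne hk b.1 ν).IsAcyclic := canon_acyclic hvw hvw.ne hk b.2 hν1 hν2
    exact (ih1 pfA pfb).trans (ih2 pfb pfB)

end Sorting

open Relation Sum Handle Finset in
theorem kappa_handle {V' : Type*} [Fintype V'] (G' : SimpleGraph V') (v w : V')
    (hvw : G'.Adj v w) (k : ℕ) (hk : 1 ≤ k) :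
    kappa (handleGraph G' v w k) = (k + 1) * kappa G' := by
  classical
  have hvw' := hvw.ne
  let Φ : AcycGraphOrientation (handleGraph G' v w k) →
      (Quot (fun A B : AcycGraphOrientation G' => Click A.1 B.1)) × Fin (k+1) :=
    fun A => (Quot.mk _ ⟨restr A.1, restr_acyclic A.2⟩,
      ⟨nu A.1 - 1, by have h1 := nu_le hvw hk A.2; omega⟩)
  have hresp : ∀ A B : AcycGraphOrientation (handleGraph G' v w k),
      Click A.1 B.1 → Φ A = Φ B := by
    intro A B hAB
    obtain ⟨x, hsrc, hBe⟩ := Click.eq_clickAt hAB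
    have hc1 : Quot.mk (fun A B : AcycGraphOrientation G' => Click A.1 B.1)
        ⟨restr A.1, restr_acyclic A.2⟩ = Quot.mk _ ⟨restr B.1, restr_acyclic B.2⟩ := by
      rcases x with a | i
      · have hsrc' : ∀ u, ¬ (restr A.1).dir u a := fun u hd => hsrc (.inl u) hd
        apply Quot.sound
        show Click (restr A.1) (restr B.1)
        rw [hBe, restr_clickAt_inl]
        exact click_clickAt _ _ hsrc'
      · have : restr B.1 = restr A.1 := by
          rw [hBe]
          exact (click_inr hvw hk A.1 i hsrc).1
        exact congrArg _ (Subtype.ext this.symm)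
    have hc2 : nu A.1 = nu B.1 := by
      rcases x with a | i
      · by_cases hav : a = v
        · subst a
          rw [hBe]
          exact (click_inl_v hvw hk A.1 hsrc).symm
        · by_cases haw : a = w
          · subst a
            rw [hBe]
            exact (click_inl_w hvw hk A.1 hsrc).symm
          · rw [hBe]
            exact (click_inl_other hvw hk A.1 hav haw).symm
      · rw [hBe]
        exact ((click_inr hvw hk A.1 i hsrc).2.1).symm
    exact Prod.ext hc1 (Fin.ext (by simp only [Φ]; omega))
  have hbij : Function.Bijective (Quot.lift Φ hresp) := by
    constructor
    · intro qa qb h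
      induction qa using Quot.ind with
      | _ A =>
        induction qb using Quot.ind with
        | _ B =>
          have h' : Φ A = Φ B := h
          have h1 : Quot.mk (fun A B : AcycGraphOrientation G' => Click A.1 B.1)
              ⟨restr A.1, restr_acyclic A.2⟩ = Quot.mk _ ⟨restr B.1, restr_acyclic B.2⟩ :=
            congrArg Prod.fst h'
          have h2 : nu A.1 - 1 = nu B.1 - 1 := congrArg (fun p => (Prod.snd p).val) h'
          have hν : nu A.1 = nu B.1 := by
            have ha := nu_pos hvw hk A.2
            have hb := nu_pos hvw hk B.2
            omega
          have pfA : (canon hvw.ne hk (restr A.1) (nu A.1)).IsAcyclic :=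
            canon_acyclic hvw hvw.ne hk (restr_acyclic A.2) (nu_pos hvw hk A.2) (nu_le hvw hk A.2)
          have pfB : (canon hvw.ne hk (restr B.1) (nu B.1)).IsAcyclic :=
            canon_acyclic hvw hvw.ne hk (restr_acyclic B.2) (nu_pos hvw hk B.2) (nu_le hvw hk B.2)
          have pfB' : (canon hvw.ne hk (restr B.1) (nu A.1)).IsAcyclic := by
            rw [hν]; exact pfB
          have s1 := sorting hvw hk _ A pfA le_rfl
          have s2 := eqv_canon hvw hk (nu_pos hvw hk A.2) (nu_le hvw hk A.2)
            ⟨restr A.1, restr_acyclic A.2⟩ ⟨restr B.1, restr_acyclic B.2⟩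
            (Quot.eqvGen_exact h1) pfA pfB'
          have s3 : Quot.mk (fun A B : AcycGraphOrientation (handleGraph G' v w k) =>
              Click A.1 B.1) ⟨canon hvw.ne hk (restr B.1) (nu A.1), pfB'⟩ =
              Quot.mk _ ⟨canon hvw.ne hk (restr B.1) (nu B.1), pfB⟩ := by
            apply congrArg
            apply Subtype.ext
            simp only
            rw [hν]
          have s4 := (sorting hvw hk _ B pfB le_rfl).symm
          exact (s1.trans (s2.trans (s3.trans s4)) : _)
    · rintro ⟨q, m⟩
      obtain ⟨B, rfl⟩ := Quot.exists_rep q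
      have hm1 : 1 ≤ m.val + 1 := by omega
      have hm2 : m.val + 1 ≤ k + 1 := by have := m.isLt; omega
      refine ⟨Quot.mk _ ⟨canon hvw.ne hk B.1 (m.val+1),
        canon_acyclic hvw hvw.ne hk B.2 hm1 hm2⟩, ?_⟩
      show Φ _ = _
      refine Prod.ext ?_ ?_
      · show Quot.mk _ (⟨restr (canon hvw.ne hk B.1 (m.val+1)), _⟩ :
          AcycGraphOrientation G') = Quot.mk _ B
        exact congrArg _ (Subtype.ext (restr_canon hvw.ne hk B.1 (m.val+1)))
      · apply Fin.ext
        show nu (canon hvw.ne hk B.1 (m.val+1)) - 1 = m.val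
        rw [nu_canon hvw.ne hk B.1 hm1 hm2]
        omega
  have hcard := Nat.card_eq_of_bijective _ hbij
  rw [Nat.card_prod] at hcard
  show Nat.card (Quot (fun A B : AcycGraphOrientation (handleGraph G' v w k) => Click A.1 B.1)) =
    (k + 1) * Nat.card (Quot (fun A B : AcycGraphOrientation G' => Click A.1 B.1))
  rw [hcard, show Nat.card (Fin (k+1)) = k + 1 from by simp, Nat.mul_comm]
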